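/- Let 1<p<∞ and let u and w be scalar A_p weights on ℝ^d. Set ν = (u w^{-1})^{1/p}. Then for every cube I, the average m_I ν is comparable (with constants depending only on the A_p characteristics of u and w, p and d) to each of the quantities (m_I u)^{1/p}(m_I w^{1−p'})^{1/p'} when raised appropriately, (m_I u)^{1/p}(m_I w)^{−1/p}, and (m_I u^{1/p})(m_I w^{1/p})^{−1}. In particular, a locally integrable b belongs to BMO_ν if and only if sup over cubes I of (1/|I|)∫_I (m_I w^{1/p})(m_I u^{1/p})^{−1} |b(x) − m_I b| dx < ∞. -/

import Mathlib

open MeasureTheory Matrix Filter Set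
open scoped ENNReal NNReal ComplexOrder

namespace MW

/-- An axis-parallel half-open cube in `ℝ^d`. -/
structure Cube (d : ℕ) where
  corner : Fin d → ℝ
  side : ℝ
  side_pos : 0 < side

namespace Cube

/-- The set of points of a cube. -/
def carrier {d : ℕ} (I : Cube d) : Set (Fin d → ℝ) :=
  {x | ∀ i, I.corner i ≤ x i ∧ x i < I.corner i + I.side}

/-- The volume `|I|` of a cube. -/
noncomputable def vol {d : ℕ} (I : Cube d) : ℝ := I.side ^ d

end Cube

/-- Euclidean norm of a complex vector. -/
noncomputable def vnorm {n : ℕ} (v : Fin n → ℂ) : ℝ :=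
  Real.sqrt (∑ i, ‖v i‖ ^ 2)

/-- Euclidean distance on `ℝ^d` (as `Fin d → ℝ`). -/
noncomputable def edist2 {d : ℕ} (x y : Fin d → ℝ) : ℝ :=
  Real.sqrt (∑ i, (x i - y i) ^ 2)

/-- Operator norm of an `n × n` complex matrix (with respect to Euclidean norms). -/
noncomputable def mnorm {n : ℕ} (M : Matrix (Fin n) (Fin n) ℂ) : ℝ :=
  ⨆ v : {v : Fin n → ℂ // vnorm v ≤ 1}, vnorm (M.mulVec v.1)

/-- Frobenius norm of a matrix. -/
noncomputable def fnorm {n : ℕ} (M : Matrix (Fin n) (Fin n) ℂ) : ℝ :=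
  Real.sqrt (∑ i, ∑ j, ‖M i j‖ ^ 2)

/-- Real power of a Hermitian matrix, via the spectral theorem (junk value `0` on
non-Hermitian matrices).  For a positive definite matrix `A` and `r : ℝ` this is the
usual power `A^r`. -/
noncomputable def mpow {n : ℕ} (A : Matrix (Fin n) (Fin n) ℂ) (r : ℝ) :
    Matrix (Fin n) (Fin n) ℂ :=
  if hA : A.IsHermitian then
    (hA.eigenvectorUnitary : Matrix (Fin n) (Fin n) ℂ) *
      Matrix.diagonal (fun i => ((hA.eigenvalues i ^ r : ℝ) : ℂ)) *
      star (hA.eigenvectorUnitary : Matrix (Fin n) (Fin n) ℂ)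
  else 0

/-- Conjugate exponent `p' = p/(p-1)`. -/
noncomputable def conjExp (p : ℝ) : ℝ := p / (p - 1)

/-- Entrywise average `m_I B` of a matrix-valued function over a cube. -/
noncomputable def avgM {d n : ℕ} (I : Cube d) (B : (Fin d → ℝ) → Matrix (Fin n) (Fin n) ℂ) :
    Matrix (Fin n) (Fin n) ℂ :=
  Matrix.of fun i j => (I.vol)⁻¹ • ∫ x in I.carrier, B x i j

/-- Entrywise average `m_I f` of a vector-valued function over a cube. -/
noncomputable def avgV {d n : ℕ} (I : Cube d) (f : (Fin d → ℝ) → Fin n → ℂ) : Fin n → ℂ :=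
  fun i => (I.vol)⁻¹ • ∫ x in I.carrier, f x i

/-- Average of a real-valued function over a cube. -/
noncomputable def savg {d : ℕ} (I : Cube d) (g : (Fin d → ℝ) → ℝ) : ℝ :=
  (I.vol)⁻¹ * ∫ x in I.carrier, g x

/-- Average of a complex-valued function over a cube. -/
noncomputable def cavg {d : ℕ} (I : Cube d) (g : (Fin d → ℝ) → ℂ) : ℂ :=
  (I.vol)⁻¹ • ∫ x in I.carrier, g x

/-- The `A_p` expression of a matrix weight on a cube. -/
noncomputable def apIntegral {d n : ℕ} (p : ℝ) (W : (Fin d → ℝ) → Matrix (Fin n) (Fin n) ℂ)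
    (I : Cube d) : ℝ≥0∞ :=
  (ENNReal.ofReal I.vol)⁻¹ *
    ∫⁻ x in I.carrier,
      ((ENNReal.ofReal I.vol)⁻¹ *
        ∫⁻ t in I.carrier,
          ENNReal.ofReal (mnorm (mpow (W x) (1 / p) * mpow (W t) (-(1 / p))) ^ conjExp p)) ^
        (p / conjExp p)

/-- A matrix `A_p` weight: measurable, a.e. positive definite, with finite `A_p`
characteristic. -/
def IsApWeight {d n : ℕ} (p : ℝ) (W : (Fin d → ℝ) → Matrix (Fin n) (Fin n) ℂ) : Prop :=
  (∀ i j, Measurable fun x => W x i j) ∧ (∀ᵐ x : Fin d → ℝ, (W x).PosDef) ∧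
    ∃ C : ℝ, ∀ I : Cube d, apIntegral p W I ≤ ENNReal.ofReal C

/-- Local integrability of a matrix-valued function (entrywise). -/
def LocIntM {d n : ℕ} (B : (Fin d → ℝ) → Matrix (Fin n) (Fin n) ℂ) : Prop :=
  ∀ i j, LocallyIntegrable (fun x => B x i j) volume

/-- The `L^p` average `((1/|I|)∫_I |W^{1/p}(x) e|^p dx)^{1/p}`. -/
noncomputable def lpAvg {d n : ℕ} (p : ℝ) (W : (Fin d → ℝ) → Matrix (Fin n) (Fin n) ℂ)
    (I : Cube d) (e : Fin n → ℂ) : ℝ≥0∞ :=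
  ((ENNReal.ofReal I.vol)⁻¹ *
    ∫⁻ x in I.carrier, ENNReal.ofReal (vnorm ((mpow (W x) (1 / p)).mulVec e) ^ p)) ^ (1 / p)

/-- The dual `L^{p'}` average `((1/|I|)∫_I |W^{-1/p}(x) e|^{p'} dx)^{1/p'}`. -/
noncomputable def lpAvgDual {d n : ℕ} (p : ℝ) (W : (Fin d → ℝ) → Matrix (Fin n) (Fin n) ℂ)
    (I : Cube d) (e : Fin n → ℂ) : ℝ≥0∞ :=
  ((ENNReal.ofReal I.vol)⁻¹ *
    ∫⁻ x in I.carrier, ENNReal.ofReal (vnorm ((mpow (W x) (-(1 / p))).mulVec e) ^ conjExp p)) ^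
    (1 / conjExp p)

/-- `V` is a family of reducing operators for the weight `W`: positive definite matrices with
`|V_I e| ≈ ((1/|I|)∫_I |W^{1/p} e|^p)^{1/p}`, with constants independent of `I`, `e`. -/
def IsReducing {d n : ℕ} (p : ℝ) (W : (Fin d → ℝ) → Matrix (Fin n) (Fin n) ℂ)
    (V : Cube d → Matrix (Fin n) (Fin n) ℂ) : Prop :=
  (∀ I, (V I).PosDef) ∧
    ∃ c C : ℝ, 0 < c ∧ ∀ (I : Cube d) (e : Fin n → ℂ),
      ENNReal.ofReal (c * vnorm ((V I).mulVec e)) ≤ lpAvg p W I e ∧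
        lpAvg p W I e ≤ ENNReal.ofReal (C * vnorm ((V I).mulVec e))

/-- `V'` is a family of dual reducing operators for the weight `W`:
`|V'_I e| ≈ ((1/|I|)∫_I |W^{-1/p} e|^{p'})^{1/p'}`. -/
def IsDualReducing {d n : ℕ} (p : ℝ) (W : (Fin d → ℝ) → Matrix (Fin n) (Fin n) ℂ)
    (V : Cube d → Matrix (Fin n) (Fin n) ℂ) : Prop :=
  (∀ I, (V I).PosDef) ∧
    ∃ c C : ℝ, 0 < c ∧ ∀ (I : Cube d) (e : Fin n → ℂ),
      ENNReal.ofReal (c * vnorm ((V I).mulVec e)) ≤ lpAvgDual p W I e ∧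
        lpAvgDual p W I e ≤ ENNReal.ofReal (C * vnorm ((V I).mulVec e))

/-- The weighted norm `‖f‖_{L^p(W)}`. -/
noncomputable def lpNormW {d n : ℕ} (p : ℝ) (W : (Fin d → ℝ) → Matrix (Fin n) (Fin n) ℂ)
    (f : (Fin d → ℝ) → Fin n → ℂ) : ℝ≥0∞ :=
  (∫⁻ x, ENNReal.ofReal (vnorm ((mpow (W x) (1 / p)).mulVec (f x)) ^ p)) ^ (1 / p)

/-- The unweighted norm `‖f‖_{L^p(ℝ^d;ℂ^n)}`. -/
noncomputable def plNorm {d n : ℕ} (p : ℝ) (f : (Fin d → ℝ) → Fin n → ℂ) : ℝ≥0∞ :=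
  (∫⁻ x, ENNReal.ofReal (vnorm (f x) ^ p)) ^ (1 / p)

/-- `T` is bounded from `L^p(U)` to `L^p(W)`. -/
def BddW {d n : ℕ} (p : ℝ) (U W : (Fin d → ℝ) → Matrix (Fin n) (Fin n) ℂ)
    (T : ((Fin d → ℝ) → Fin n → ℂ) → (Fin d → ℝ) → Fin n → ℂ) : Prop :=
  ∃ C : ℝ, ∀ f, lpNormW p W (T f) ≤ ENNReal.ofReal C * lpNormW p U f

/-- `T` is bounded on (unweighted) `L^p(ℝ^d;ℂ^n)`. -/
def BddPlain {d n : ℕ} (p : ℝ)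
    (T : ((Fin d → ℝ) → Fin n → ℂ) → (Fin d → ℝ) → Fin n → ℂ) : Prop :=
  ∃ C : ℝ, ∀ f, plNorm p (T f) ≤ ENNReal.ofReal C * plNorm p f

/-- The principal value convolution operator with kernel `K` (scalar valued),
defined as the limit of the truncated singular integrals. -/
noncomputable def czo {d : ℕ} (K : (Fin d → ℝ) → ℝ) (g : (Fin d → ℝ) → ℂ)
    (x : Fin d → ℝ) : ℂ :=
  limUnder (nhdsWithin (0 : ℝ) (Set.Ioi 0)) fun ε : ℝ =>
    ∫ y in {y | ε < edist2 x y}, (K (x - y) : ℂ) * g y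

/-- The `j`-th Riesz transform, as the principal value convolution with the kernel
`x_j / |x|^{d+1}`. -/
noncomputable def riesz {d : ℕ} (j : Fin d) : ((Fin d → ℝ) → ℂ) → (Fin d → ℝ) → ℂ :=
  czo fun z => z j / edist2 z 0 ^ (d + 1)

/-- Apply a scalar operator entrywise to a `ℂ^n`-valued function. -/
noncomputable def entrywise {d n : ℕ} (T : ((Fin d → ℝ) → ℂ) → (Fin d → ℝ) → ℂ)
    (f : (Fin d → ℝ) → Fin n → ℂ) : (Fin d → ℝ) → Fin n → ℂ :=
  fun x i => T (fun y => f y i) x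

/-- The commutator `[T, B] f = T(Bf) - B(Tf)` of a scalar (entrywise) operator with a
matrix symbol. -/
noncomputable def commutator {d n : ℕ} (T : ((Fin d → ℝ) → ℂ) → (Fin d → ℝ) → ℂ)
    (B : (Fin d → ℝ) → Matrix (Fin n) (Fin n) ℂ) (f : (Fin d → ℝ) → Fin n → ℂ) :
    (Fin d → ℝ) → Fin n → ℂ :=
  fun x => entrywise T (fun y => (B y).mulVec (f y)) x - (B x).mulVec (entrywise T f x)

/-- The two matrix weighted space `BMO^p_{W,U}`: for some `ε > 0`,
`sup_I (1/|I|) ∫_I ‖(m_I W^{1/p}) (B(x) - m_I B) (m_I U^{1/p})⁻¹‖^{1+ε} dx < ∞`. -/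
def BMOfull {d n : ℕ} (p : ℝ) (W U B : (Fin d → ℝ) → Matrix (Fin n) (Fin n) ℂ) : Prop :=
  ∃ ε : ℝ, 0 < ε ∧ ∃ C : ℝ, ∀ I : Cube d,
    (∫⁻ x in I.carrier,
      ENNReal.ofReal
        (mnorm (avgM I (fun t => mpow (W t) (1 / p)) * (B x - avgM I B) *
          (avgM I fun t => mpow (U t) (1 / p))⁻¹) ^ (1 + ε))) ≤
      ENNReal.ofReal (C * I.vol)

/-- The dyadic version of `BMO^p_{W,U}` relative to a family `𝒟` of cubes. -/
def BMOfullD {d n : ℕ} (p : ℝ) (𝒟 : Set (Cube d))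
    (W U B : (Fin d → ℝ) → Matrix (Fin n) (Fin n) ℂ) : Prop :=
  ∃ ε : ℝ, 0 < ε ∧ ∃ C : ℝ, ∀ I ∈ 𝒟,
    (∫⁻ x in I.carrier,
      ENNReal.ofReal
        (mnorm (avgM I (fun t => mpow (W t) (1 / p)) * (B x - avgM I B) *
          (avgM I fun t => mpow (U t) (1 / p))⁻¹) ^ (1 + ε))) ≤
      ENNReal.ofReal (C * I.vol)

/-- A dyadic grid: a family of cubes of dyadic side lengths such that each scale is a
partition of `ℝ^d` and any two cubes of the family are nested or disjoint. -/
def IsDyadicGrid {d : ℕ} (𝒟 : Set (Cube d)) : Prop :=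
  (∀ I ∈ 𝒟, ∃ k : ℤ, I.side = (2 : ℝ) ^ (-k)) ∧
    (∀ (k : ℤ) (x : Fin d → ℝ), ∃! I : Cube d,
      I ∈ 𝒟 ∧ I.side = (2 : ℝ) ^ (-k) ∧ x ∈ I.carrier) ∧
    ∀ I ∈ 𝒟, ∀ J ∈ 𝒟,
      I.carrier ⊆ J.carrier ∨ J.carrier ⊆ I.carrier ∨ Disjoint I.carrier J.carrier

/-- The dyadic subcubes `D(J)` of `J` belonging to the family `𝒟`. -/
def dsub {d : ℕ} (𝒟 : Set (Cube d)) (J : Cube d) : Set (Cube d) :=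
  {I | I ∈ 𝒟 ∧ I.carrier ⊆ J.carrier}

/-- The set of cancellative Haar signatures: `ε ∈ {0,1}^d ∖ {(1,…,1)}`, where `true`
codes `1` (the noncancellative factor). -/
def Sig (d : ℕ) : Type := {ε : Fin d → Bool // ∃ i, ε i = false}

/-- One-dimensional noncancellative Haar factor `h^1`. -/
noncomputable def haarOne (a h x : ℝ) : ℝ :=
  if a ≤ x ∧ x < a + h then (Real.sqrt h)⁻¹ else 0

/-- One-dimensional cancellative Haar factor `h^0`. -/
noncomputable def haarZero (a h x : ℝ) : ℝ :=
  if a ≤ x ∧ x < a + h / 2 then (Real.sqrt h)⁻¹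
  else if a + h / 2 ≤ x ∧ x < a + h then -(Real.sqrt h)⁻¹ else 0

/-- The Haar function `h_I^ε` on `ℝ^d`. -/
noncomputable def haar {d : ℕ} (I : Cube d) (ε : Fin d → Bool) (x : Fin d → ℝ) : ℝ :=
  ∏ i, if ε i then haarOne (I.corner i) I.side (x i) else haarZero (I.corner i) I.side (x i)

/-- The matrix of Haar coefficients `B_I^ε = ∫ B h_I^ε`. -/
noncomputable def mHaarCoef {d n : ℕ} (B : (Fin d → ℝ) → Matrix (Fin n) (Fin n) ℂ)
    (I : Cube d) (ε : Fin d → Bool) : Matrix (Fin n) (Fin n) ℂ :=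
  Matrix.of fun i j => ∫ x, (haar I ε x : ℂ) * B x i j

/-- The vector of Haar coefficients `f_I^ε = ∫ f h_I^ε`. -/
noncomputable def vHaarCoef {d n : ℕ} (f : (Fin d → ℝ) → Fin n → ℂ)
    (I : Cube d) (ε : Fin d → Bool) : Fin n → ℂ :=
  fun i => ∫ x, (haar I ε x : ℂ) * f x i

/-- The condition (b) of the Carleson embedding theorem:
`sup_{J∈𝒟} (1/|J|) Σ_{I∈𝒟(J)} Σ_ε ‖V_I(W) A_I^ε V_I(U)⁻¹‖² < ∞`. -/
def BseqCond {d n : ℕ} (𝒟 : Set (Cube d)) (VW VU : Cube d → Matrix (Fin n) (Fin n) ℂ)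
    (A : Cube d → (Fin d → Bool) → Matrix (Fin n) (Fin n) ℂ) : Prop :=
  ∃ C : ℝ, ∀ J ∈ 𝒟,
    (∑' (I : ↥(dsub 𝒟 J)) (ε : Sig d),
      ENNReal.ofReal (mnorm (VW I.1 * A I.1 ε.1 * (VU I.1)⁻¹) ^ 2)) ≤
      ENNReal.ofReal (C * J.vol)

/-- The quantity `(1/|K|) Σ_{I∈𝒟(K)} Σ_ε ‖V_I(W) A_I^ε (V_K(U))⁻¹‖²` (unnormalized sum). -/
noncomputable def boutSum {d n : ℕ} (𝒟 : Set (Cube d))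
    (VW VU : Cube d → Matrix (Fin n) (Fin n) ℂ)
    (A : Cube d → (Fin d → Bool) → Matrix (Fin n) (Fin n) ℂ) (K : Cube d) : ℝ≥0∞ :=
  ∑' (I : ↥(dsub 𝒟 K)) (ε : Sig d),
    ENNReal.ofReal (mnorm (VW I.1 * A I.1 ε.1 * (VU K)⁻¹) ^ 2)

/-- The condition `𝔅(W,U,A,p) < ∞` of the Carleson embedding theorem. -/
def BoutCond {d n : ℕ} (𝒟 : Set (Cube d)) (VW VU : Cube d → Matrix (Fin n) (Fin n) ℂ)
    (A : Cube d → (Fin d → Bool) → Matrix (Fin n) (Fin n) ℂ) : Prop :=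
  ∃ C : ℝ, ∀ K ∈ 𝒟, boutSum 𝒟 VW VU A K ≤ ENNReal.ofReal (C * K.vol)

/-- The generic paraproduct-type operator
`Π f = Σ_{ε} Σ_{I∈𝒟} V_I A_I^ε m_I(G f) h_I^ε`. -/
noncomputable def PiOp {d n : ℕ} (𝒟 : Set (Cube d)) (V : Cube d → Matrix (Fin n) (Fin n) ℂ)
    (A : Cube d → (Fin d → Bool) → Matrix (Fin n) (Fin n) ℂ)
    (G : (Fin d → ℝ) → Matrix (Fin n) (Fin n) ℂ) (f : (Fin d → ℝ) → Fin n → ℂ) :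
    (Fin d → ℝ) → Fin n → ℂ :=
  fun x => ∑' (I : ↥𝒟) (ε : Sig d),
    (haar I.1 ε.1 x : ℂ) • ((V I.1 * A I.1 ε.1).mulVec (avgV I.1 fun t => (G t).mulVec (f t)))

/-- The dyadic paraproduct `π_B f = Σ_{ε} Σ_{I∈𝒟} B_I^ε (m_I f) h_I^ε`. -/
noncomputable def para {d n : ℕ} (𝒟 : Set (Cube d))
    (B : (Fin d → ℝ) → Matrix (Fin n) (Fin n) ℂ) (f : (Fin d → ℝ) → Fin n → ℂ) :
    (Fin d → ℝ) → Fin n → ℂ :=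
  fun x => ∑' (I : ↥𝒟) (ε : Sig d),
    (haar I.1 ε.1 x : ℂ) • ((mHaarCoef B I.1 ε.1).mulVec (avgV I.1 f))

/-- The adjoint of the paraproduct `π_{B^*}`, namely
`(π_{B^*})^* f = Σ_{ε} Σ_{I∈𝒟} B_I^ε f_I^ε χ_I/|I|`. -/
noncomputable def paraAdj {d n : ℕ} (𝒟 : Set (Cube d))
    (B : (Fin d → ℝ) → Matrix (Fin n) (Fin n) ℂ) (f : (Fin d → ℝ) → Fin n → ℂ) :
    (Fin d → ℝ) → Fin n → ℂ :=
  fun x => ∑' (I : ↥𝒟) (ε : Sig d),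
    (Set.indicator I.1.carrier (fun _ => (I.1.vol)⁻¹) x : ℝ) •
      ((mHaarCoef B I.1 ε.1).mulVec (vHaarCoef f I.1 ε.1))

/-- The Haar multiplier `T_A f = Σ_{I,ε} A_I^ε f_I^ε h_I^ε`. -/
noncomputable def haarMult {d n : ℕ} (𝒟 : Set (Cube d))
    (A : Cube d → (Fin d → Bool) → Matrix (Fin n) (Fin n) ℂ)
    (f : (Fin d → ℝ) → Fin n → ℂ) : (Fin d → ℝ) → Fin n → ℂ :=
  fun x => ∑' (I : ↥𝒟) (ε : Sig d),
    (haar I.1 ε.1 x : ℂ) • ((A I.1 ε.1).mulVec (vHaarCoef f I.1 ε.1))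

/-- The `H¹_{W,U,𝒟}` norm: `‖S_{W^{-1},𝒟}(M_U Φ)‖_{L¹}`, where
`(M_U Φ)_I^ε = Φ_I^ε (m_I U)^{1/2}`. -/
noncomputable def H1normD {d n : ℕ} (𝒟 : Set (Cube d))
    (W U Φ : (Fin d → ℝ) → Matrix (Fin n) (Fin n) ℂ) : ℝ≥0∞ :=
  ∫⁻ x,
    (∑' (I : ↥𝒟) (ε : Sig d),
      ENNReal.ofReal
        (Set.indicator I.1.carrier
          (fun _ =>
            mnorm (mpow (W x) (-(1 / 2 : ℝ)) * mHaarCoef Φ I.1 ε.1 *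
              mpow (avgM I.1 U) (1 / 2)) ^ 2 / I.1.vol) x)) ^ ((1 : ℝ) / 2)

/-- The `L²` pairing `⟨Φ, B⟩ = ∫ tr (Φ(x) B(x)^*) dx`. -/
noncomputable def pairing {d n : ℕ} (Φ B : (Fin d → ℝ) → Matrix (Fin n) (Fin n) ℂ) : ℂ :=
  ∫ x, Matrix.trace (Φ x * (B x)ᴴ)

/-- The `BMO~_{W,U,𝒟}` (two matrix weighted, `p = 2`) square sum over `J`. -/
noncomputable def bmo2sum {d n : ℕ} (𝒟 : Set (Cube d))
    (W U B : (Fin d → ℝ) → Matrix (Fin n) (Fin n) ℂ) (J : Cube d) : ℝ≥0∞ :=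
  ∑' (I : ↥(dsub 𝒟 J)) (ε : Sig d),
    ENNReal.ofReal
      (mnorm (mpow (avgM I.1 W) (1 / 2) * mHaarCoef B I.1 ε.1 *
        mpow (avgM I.1 U) (-(1 / 2 : ℝ))) ^ 2)

/-- The standard shifted dyadic grids `𝒟^t = {2^{-k}([0,1)^d + m + (-1)^k t)}`. -/
def stdGrid (d : ℕ) (t : ℝ) : Set (Cube d) :=
  {I | ∃ k : ℤ, ∃ m : Fin d → ℤ, I.side = (2 : ℝ) ^ (-k) ∧
    ∀ i, I.corner i = (2 : ℝ) ^ (-k) * ((m i : ℝ) + (-1 : ℝ) ^ k * t)}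

/-- A scalar `A_p` weight with characteristic bounded by `C`. -/
def IsScalarAp {d : ℕ} (p : ℝ) (w : (Fin d → ℝ) → ℝ) (C : ℝ) : Prop :=
  Measurable w ∧ (∀ᵐ x : Fin d → ℝ, 0 < w x) ∧ LocallyIntegrable w volume ∧
    LocallyIntegrable (fun x => w x ^ (1 - conjExp p)) volume ∧
    ∀ I : Cube d, savg I w * (savg I fun x => w x ^ (1 - conjExp p)) ^ (p - 1) ≤ C

end MW

namespace MW


section auxhelpers
variable {α : Type*} [MeasurableSpace α] {μ : Measure α}

private lemma memLp_of_integrable_rpow {f : α → ℝ} {s : ℝ} (hs : 0 < s)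
    (hm : AEStronglyMeasurable f μ) (h0 : 0 ≤ᵐ[μ] f)
    (hi : Integrable (fun x => f x ^ s) μ) : MemLp f (ENNReal.ofReal s) μ := by
  have hq0 : (ENNReal.ofReal s) ≠ 0 := by simp [ENNReal.ofReal_eq_zero, not_le, hs]
  have hqt : (ENNReal.ofReal s) ≠ ⊤ := ENNReal.ofReal_ne_top
  have h1 : MemLp (fun x => ‖f x‖ ^ (ENNReal.ofReal s).toReal) 1 μ := by
    rw [ENNReal.toReal_ofReal hs.le]
    refine (memLp_one_iff_integrable.2 hi).ae_eq ?_
    filter_upwards [h0] with x hx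
    rw [Real.norm_of_nonneg hx]
  exact (memLp_norm_rpow_iff (p := ENNReal.ofReal s) hm hq0 hqt).1 (by
    rwa [ENNReal.div_self hq0 hqt])

private lemma one_le_mul_of_rpow {X Y s t : ℝ} (hX : 0 < X) (hY : 0 < Y) (hs : 0 < s)
    (h : 1 ≤ X ^ (1/s) * Y ^ (1/t)) : 1 ≤ X * Y ^ (s/t) := by
  have h2 := Real.rpow_le_rpow (by positivity) h hs.le
  rwa [Real.one_rpow, Real.mul_rpow (by positivity) (by positivity),
    ← Real.rpow_mul hX.le, ← Real.rpow_mul hY.le, one_div_mul_cancel hs.ne',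
    Real.rpow_one, div_mul_eq_mul_div, one_mul] at h2

private lemma aesm_rpow {F : α → ℝ}
    (hFm : AEMeasurable F μ) (a : ℝ) (hF0 : ∀ᵐ x ∂μ, 0 < F x) :
    AEStronglyMeasurable (fun x => F x ^ a) μ := by
  have h : (fun x => F x ^ a) =ᵐ[μ] fun x => Real.exp (Real.log (F x) * a) :=
    hF0.mono fun x hx => Real.rpow_def_of_pos hx a
  exact ((Real.measurable_exp.comp_aemeasurable
    ((Real.measurable_log.comp_aemeasurable hFm).mul_const a)).aestronglyMeasurable).congr h.symm

private lemma arith_main {p q Ku Kw A S SU W nu nu' P Q : ℝ}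
    (hpq : Real.HolderConjugate p q) (hKu : 0 < Ku) (hKw : 0 < Kw)
    (hA : 0 < A) (hS : 0 < S) (hSU : 0 < SU) (hW : 0 < W)
    (hnu : 0 < nu) (hnu' : 0 < nu') (hP : 0 < P) (hQ : 0 < Q)
    (fa : nu ≤ A ^ (1/p) * S ^ (1/q))
    (fb : nu' ≤ W ^ (1/p) * SU ^ (1/q))
    (fc : 1 ≤ nu * nu')
    (fd : 1 ≤ W ^ (1/p) * S ^ (1/q))
    (fgP : P ≤ A ^ (1/p)) (fgQ : Q ≤ W ^ (1/p))
    (fhP : SU ^ (-(1/q)) ≤ P) (fhQ : S ^ (-(1/q)) ≤ Q)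
    (apu : A * SU ^ (p-1) ≤ Ku) (apw : W * S ^ (p-1) ≤ Kw) :
    ((Ku*Kw) ^ (-(1/p)) * (A ^ (1/p) * S ^ (1/q)) ≤ nu ∧
      nu ≤ 1 * (A ^ (1/p) * S ^ (1/q))) ∧
    ((Ku*Kw) ^ (-(1/p)) * (A ^ (1/p) * W ^ (-(1/p))) ≤ nu ∧
      nu ≤ Kw ^ (1/p) * (A ^ (1/p) * W ^ (-(1/p)))) ∧
    ((Ku*Kw) ^ (-(1/p)) * (P * Q⁻¹) ≤ nu ∧
      nu ≤ (Ku*Kw) ^ (1/p) * (P * Q⁻¹)) := by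
  have hp : 0 < p := hpq.pos
  have hq : 0 < q := hpq.symm.pos
  have hr : (0:ℝ) < 1/p := by positivity
  have hrq : (0:ℝ) < 1/q := by positivity
  have hpq1 : (p - 1) * (1/p) = 1/q := by
    field_simp
    exact hpq.sub_one_mul_conj
  have hSUp : (0:ℝ) < SU ^ (p-1) := Real.rpow_pos_of_pos hSU _
  have key1 : A ^ (1/p) ≤ Ku ^ (1/p) * SU ^ (-(1/q)) := by
    have h1 : A ≤ Ku * SU ^ (-(p-1)) := by
      rw [Real.rpow_neg hSU.le]
      rw [mul_comm] at apu
      calc A = SU ^ (p-1) * A * (SU ^ (p-1))⁻¹ := by field_simp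
        _ ≤ Ku * (SU ^ (p-1))⁻¹ := by
            apply mul_le_mul_of_nonneg_right apu (by positivity)
    calc A ^ (1/p) ≤ (Ku * SU ^ (-(p-1))) ^ (1/p) :=
          Real.rpow_le_rpow hA.le h1 hr.le
      _ = Ku ^ (1/p) * SU ^ (-(1/q)) := by
          rw [Real.mul_rpow hKu.le (Real.rpow_nonneg hSU.le _),
            ← Real.rpow_mul hSU.le, neg_mul, hpq1]
  have key2 : S ^ (1/q) ≤ Kw ^ (1/p) * W ^ (-(1/p)) := by
    have h1 : S ^ (p-1) ≤ Kw * W⁻¹ := by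
      rw [mul_comm] at apw
      calc S ^ (p-1) = S ^ (p-1) * W * W⁻¹ := by field_simp
        _ ≤ Kw * W⁻¹ := mul_le_mul_of_nonneg_right apw (by positivity)
    calc S ^ (1/q) = (S ^ (p-1)) ^ (1/p) := by
          rw [← Real.rpow_mul hS.le, hpq1]
      _ ≤ (Kw * W⁻¹) ^ (1/p) :=
          Real.rpow_le_rpow (by positivity) h1 hr.le
      _ = Kw ^ (1/p) * W ^ (-(1/p)) := by
          rw [Real.mul_rpow hKw.le (by positivity), Real.inv_rpow hW.le,
            Real.rpow_neg hW.le]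
  have hmain : A ^ (1/p) * S ^ (1/q) ≤ (Ku * Kw) ^ (1/p) * nu := by
    have hWr : (0:ℝ) < W ^ (1/p) := Real.rpow_pos_of_pos hW _
    have hSUr : (0:ℝ) < SU ^ (1/q) := Real.rpow_pos_of_pos hSU _
    have h2 : SU ^ (-(1/q)) * W ^ (-(1/p)) ≤ nu := by
      have hinv : (W ^ (1/p) * SU ^ (1/q))⁻¹ ≤ nu'⁻¹ :=
        inv_anti₀ hnu' fb
      have h3 : nu'⁻¹ ≤ nu := by
        rw [inv_le_iff_one_le_mul₀ hnu']
        linarith [fc]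
      calc SU ^ (-(1/q)) * W ^ (-(1/p))
          = (W ^ (1/p) * SU ^ (1/q))⁻¹ := by
            rw [Real.rpow_neg hSU.le, Real.rpow_neg hW.le, mul_inv, mul_comm]
        _ ≤ nu'⁻¹ := hinv
        _ ≤ nu := h3
    calc A ^ (1/p) * S ^ (1/q)
        ≤ (Ku ^ (1/p) * SU ^ (-(1/q))) * (Kw ^ (1/p) * W ^ (-(1/p))) := by
          apply mul_le_mul key1 key2 (by positivity) (by positivity)
      _ = (Ku ^ (1/p) * Kw ^ (1/p)) * (SU ^ (-(1/q)) * W ^ (-(1/p))) := by ring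
      _ ≤ (Ku ^ (1/p) * Kw ^ (1/p)) * nu :=
          mul_le_mul_of_nonneg_left h2 (by positivity)
      _ = (Ku * Kw) ^ (1/p) * nu := by
          rw [Real.mul_rpow hKu.le hKw.le]
  have hk : (0:ℝ) < (Ku * Kw) ^ (1/p) := Real.rpow_pos_of_pos (by positivity) _
  have hkneg : (Ku*Kw) ^ (-(1/p)) = ((Ku*Kw) ^ (1/p))⁻¹ := by
    rw [Real.rpow_neg (by positivity)]
  have hred : ∀ Z : ℝ, Z ≤ A ^ (1/p) * S ^ (1/q) → (Ku*Kw) ^ (-(1/p)) * Z ≤ nu := by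
    intro Z hZ
    rw [hkneg, inv_mul_le_iff₀ hk]
    calc Z ≤ A ^ (1/p) * S ^ (1/q) := hZ
      _ ≤ (Ku * Kw) ^ (1/p) * nu := hmain
  have hWinv : W ^ (-(1/p)) ≤ S ^ (1/q) := by
    have h : (W ^ (1/p))⁻¹ ≤ S ^ (1/q) := by
      rw [inv_le_iff_one_le_mul₀ (Real.rpow_pos_of_pos hW _)]
      calc (1:ℝ) ≤ W ^ (1/p) * S ^ (1/q) := fd
        _ = S ^ (1/q) * W ^ (1/p) := by ring
    rwa [Real.rpow_neg hW.le]
  have hQinv : Q⁻¹ ≤ S ^ (1/q) := by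
    have h1 : (S ^ (1/q))⁻¹ ≤ Q := by
      rwa [← Real.rpow_neg hS.le]
    calc Q⁻¹ ≤ ((S ^ (1/q))⁻¹)⁻¹ :=
          inv_anti₀ (by positivity) h1
      _ = S ^ (1/q) := by rw [inv_inv]
  refine ⟨⟨hred _ le_rfl, by linarith [fa]⟩, ⟨?_, ?_⟩, ⟨?_, ?_⟩⟩
  · exact hred _ (mul_le_mul_of_nonneg_left hWinv (by positivity))
  · calc nu ≤ A ^ (1/p) * S ^ (1/q) := fa
      _ ≤ A ^ (1/p) * (Kw ^ (1/p) * W ^ (-(1/p))) :=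
          mul_le_mul_of_nonneg_left key2 (by positivity)
      _ = Kw ^ (1/p) * (A ^ (1/p) * W ^ (-(1/p))) := by ring
  · exact hred _ (mul_le_mul fgP hQinv (by positivity) (by positivity))
  · have hWQ : W ^ (-(1/p)) ≤ Q⁻¹ := by
      rw [Real.rpow_neg hW.le]
      exact inv_anti₀ hQ fgQ
    calc nu ≤ A ^ (1/p) * S ^ (1/q) := fa
      _ ≤ (Ku ^ (1/p) * SU ^ (-(1/q))) * (Kw ^ (1/p) * W ^ (-(1/p))) :=
          mul_le_mul key1 key2 (by positivity) (by positivity)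
      _ ≤ (Ku ^ (1/p) * P) * (Kw ^ (1/p) * Q⁻¹) := by
          apply mul_le_mul
          · exact mul_le_mul_of_nonneg_left fhP (by positivity)
          · exact mul_le_mul_of_nonneg_left hWQ (by positivity)
          · positivity
          · positivity
      _ = (Ku * Kw) ^ (1/p) * (P * Q⁻¹) := by
          rw [Real.mul_rpow hKu.le hKw.le]; ring
end auxhelpers

variable {d : ℕ}

private lemma Cube.carrier_eq (I : Cube d) :
    I.carrier = Set.pi Set.univ (fun i => Set.Ico (I.corner i) (I.corner i + I.side)) := by
  ext x; simp [Cube.carrier, Set.mem_pi, Set.mem_Ico]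

private lemma Cube.measurableSet_carrier (I : Cube d) : MeasurableSet I.carrier := by
  rw [I.carrier_eq]; exact MeasurableSet.univ_pi fun i => measurableSet_Ico

private lemma Cube.vol_pos (I : Cube d) : 0 < I.vol := pow_pos I.side_pos d

private lemma Cube.volume_carrier (I : Cube d) : volume I.carrier = ENNReal.ofReal I.vol := by
  rw [I.carrier_eq, volume_pi_pi]
  simp [Real.volume_Ico, Cube.vol, ← ENNReal.ofReal_pow I.side_pos.le]

private lemma Cube.isBounded_carrier (I : Cube d) : Bornology.IsBounded I.carrier := by
  rw [I.carrier_eq]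
  exact Bornology.IsBounded.pi fun i => Metric.isBounded_Ico _ _

private lemma integrableOn_carrier {f : (Fin d → ℝ) → ℝ} (hf : LocallyIntegrable f volume)
    (I : Cube d) : IntegrableOn f I.carrier volume :=
  ((hf.integrableOn_isCompact I.isBounded_carrier.isCompact_closure).mono_set
    subset_closure)

private lemma savg_one (I : Cube d) : savg I (fun _ => (1:ℝ)) = 1 := by
  simp [savg, measureReal_def, Cube.volume_carrier, ENNReal.toReal_ofReal I.vol_pos.le,
    inv_mul_cancel₀ I.vol_pos.ne']

private lemma savg_congr (I : Cube d) {f g : (Fin d → ℝ) → ℝ}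
    (h : f =ᵐ[volume.restrict I.carrier] g) : savg I f = savg I g := by
  unfold savg; rw [integral_congr_ae h]

private lemma savg_pos (I : Cube d) {g : (Fin d → ℝ) → ℝ}
    (hi : IntegrableOn g I.carrier volume) (h0 : ∀ᵐ x, 0 < g x) :
    0 < savg I g := by
  have h0' : 0 ≤ᵐ[volume.restrict I.carrier] g :=
    ae_restrict_of_ae (h0.mono fun x hx => hx.le)
  have hpos : 0 < ∫ x in I.carrier, g x := by
    rw [setIntegral_pos_iff_support_of_nonneg_ae h0' hi]
    have hnull : volume (I.carrier \ Function.support g) = 0 := by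
      refine measure_mono_null (fun x hx => ?_) (ae_iff.1 h0)
      have hx2 : g x = 0 := by
        have := hx.2
        simpa [Function.mem_support, not_not] using this
      simp only [Set.mem_setOf_eq, not_lt, hx2, le_refl]
    have hle : volume I.carrier ≤ volume (Function.support g ∩ I.carrier) := by
      calc volume I.carrier
          ≤ volume ((Function.support g ∩ I.carrier) ∪ (I.carrier \ Function.support g)) := by
            refine measure_mono fun x hx => ?_
            by_cases hxs : x ∈ Function.support g
            · exact Or.inl ⟨hxs, hx⟩
            · exact Or.inr ⟨hx, hxs⟩
        _ ≤ volume (Function.support g ∩ I.carrier) +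
              volume (I.carrier \ Function.support g) := measure_union_le _ _
        _ = volume (Function.support g ∩ I.carrier) := by rw [hnull, add_zero]
    refine lt_of_lt_of_le ?_ hle
    rw [I.volume_carrier]
    exact ENNReal.ofReal_pos.2 I.vol_pos
  exact mul_pos (inv_pos.2 I.vol_pos) hpos

private lemma savg_holder (I : Cube d) {f g : (Fin d → ℝ) → ℝ} {s t : ℝ}
    (hst : Real.HolderConjugate s t)
    (hf : AEStronglyMeasurable f (volume.restrict I.carrier))
    (hg : AEStronglyMeasurable g (volume.restrict I.carrier))
    (hf0 : 0 ≤ᵐ[volume.restrict I.carrier] f)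
    (hg0 : 0 ≤ᵐ[volume.restrict I.carrier] g)
    (hfs : IntegrableOn (fun x => f x ^ s) I.carrier volume)
    (hgt : IntegrableOn (fun x => g x ^ t) I.carrier volume) :
    savg I (fun x => f x * g x) ≤
      (savg I fun x => f x ^ s) ^ (1/s) * (savg I fun x => g x ^ t) ^ (1/t) := by
  have hmf := memLp_of_integrable_rpow hst.pos hf hf0 hfs
  have hmg := memLp_of_integrable_rpow hst.symm.pos hg hg0 hgt
  have H := integral_mul_le_Lp_mul_Lq_of_nonneg hst hf0 hg0 hmf hmg
  unfold savg
  have hv : (0:ℝ) < I.vol⁻¹ := by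
    have := I.vol_pos; positivity
  have hfs0 : 0 ≤ ∫ x in I.carrier, f x ^ s :=
    integral_nonneg_of_ae (by filter_upwards [hf0] with x hx; exact Real.rpow_nonneg hx s)
  have hgt0 : 0 ≤ ∫ x in I.carrier, g x ^ t :=
    integral_nonneg_of_ae (by filter_upwards [hg0] with x hx; exact Real.rpow_nonneg hx t)
  have hsplit : I.vol⁻¹ = I.vol⁻¹ ^ (1/s) * I.vol⁻¹ ^ (1/t) := by
    rw [← Real.rpow_add hv, one_div, one_div, hst.inv_add_inv_eq_inv, inv_one, Real.rpow_one]
  calc I.vol⁻¹ * ∫ x in I.carrier, f x * g x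
      ≤ I.vol⁻¹ * ((∫ x in I.carrier, f x ^ s) ^ (1/s) * (∫ x in I.carrier, g x ^ t) ^ (1/t)) :=
        mul_le_mul_of_nonneg_left H hv.le
    _ = _ := by
        rw [Real.mul_rpow hv.le hfs0, Real.mul_rpow hv.le hgt0,
          show I.vol⁻¹ ^ (1/s) * (∫ x in I.carrier, f x ^ s) ^ (1/s) *
              (I.vol⁻¹ ^ (1/t) * (∫ x in I.carrier, g x ^ t) ^ (1/t)) =
            (I.vol⁻¹ ^ (1/s) * I.vol⁻¹ ^ (1/t)) *
              ((∫ x in I.carrier, f x ^ s) ^ (1/s) * (∫ x in I.carrier, g x ^ t) ^ (1/t)) by ring,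
          ← hsplit]

private lemma integrableOn_rpow_mul (I : Cube d) {F G : (Fin d → ℝ) → ℝ} {a b s t : ℝ}
    (hst : Real.HolderConjugate s t) (hFm : Measurable F) (hGm : Measurable G)
    (hF0 : ∀ᵐ x, 0 < F x) (hG0 : ∀ᵐ x, 0 < G x)
    (hFs : IntegrableOn (fun x => F x ^ (a*s)) I.carrier volume)
    (hGt : IntegrableOn (fun x => G x ^ (b*t)) I.carrier volume) :
    IntegrableOn (fun x => F x ^ a * G x ^ b) I.carrier volume := by
  refine Integrable.mono' ((hFs.div_const s).add (hGt.div_const t)) ?_ ?_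
  · exact (aesm_rpow (hFm.aemeasurable.restrict) a (ae_restrict_of_ae hF0)).mul
      (aesm_rpow (hGm.aemeasurable.restrict) b (ae_restrict_of_ae hG0))
  · filter_upwards [ae_restrict_of_ae hF0, ae_restrict_of_ae hG0] with x hFx hGx
    have h1 : ‖F x ^ a * G x ^ b‖ = F x ^ a * G x ^ b := by
      rw [Real.norm_of_nonneg]; positivity
    rw [h1]
    have := Real.young_inequality_of_nonneg (Real.rpow_nonneg hFx.le a)
      (Real.rpow_nonneg hGx.le b) hst
    rwa [← Real.rpow_mul hFx.le, ← Real.rpow_mul hGx.le] at this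

private lemma savg_rpow_holder (I : Cube d) {F G : (Fin d → ℝ) → ℝ} {a b s t : ℝ}
    (hst : Real.HolderConjugate s t) (hFm : Measurable F) (hGm : Measurable G)
    (hF0 : ∀ᵐ x, 0 < F x) (hG0 : ∀ᵐ x, 0 < G x)
    (hFs : IntegrableOn (fun x => F x ^ (a*s)) I.carrier volume)
    (hGt : IntegrableOn (fun x => G x ^ (b*t)) I.carrier volume) :
    savg I (fun x => F x ^ a * G x ^ b) ≤
      (savg I fun x => F x ^ (a*s)) ^ (1/s) * (savg I fun x => G x ^ (b*t)) ^ (1/t) := by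
  have hF0' := ae_restrict_of_ae (μ := volume) (s := I.carrier) hF0
  have hG0' := ae_restrict_of_ae (μ := volume) (s := I.carrier) hG0
  have eF : (fun x => F x ^ (a*s)) =ᵐ[volume.restrict I.carrier] fun x => (F x ^ a) ^ s := by
    filter_upwards [hF0'] with x hx
    rw [← Real.rpow_mul hx.le]
  have eG : (fun x => G x ^ (b*t)) =ᵐ[volume.restrict I.carrier] fun x => (G x ^ b) ^ t := by
    filter_upwards [hG0'] with x hx
    rw [← Real.rpow_mul hx.le]
  have h := savg_holder I hst
    (aesm_rpow (hFm.aemeasurable.restrict) a hF0')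
    (aesm_rpow (hGm.aemeasurable.restrict) b hG0')
    (hF0'.mono fun x hx => Real.rpow_nonneg hx.le a)
    (hG0'.mono fun x hx => Real.rpow_nonneg hx.le b)
    (hFs.congr eF) (hGt.congr eG)
  rwa [savg_congr I eF, savg_congr I eG]

private lemma cube_facts {p Cu Cw : ℝ} (hp : 1 < p) {u w : (Fin d → ℝ) → ℝ}
    (hu : IsScalarAp p u Cu) (hw : IsScalarAp p w Cw) (I : Cube d) :
    0 < savg I (fun x => (u x / w x) ^ (1 / p)) ∧
    (0 < (savg I fun x => u x ^ (1 / p))) ∧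
    (0 < (savg I fun x => w x ^ (1 / p))) ∧
    ((((max Cu 1)*(max Cw 1)) ^ (-(1/p)) * (savg I u ^ (1 / p) *
        (savg I fun x => w x ^ (1 - conjExp p)) ^ (1 / conjExp p)) ≤
        savg I (fun x => (u x / w x) ^ (1 / p)) ∧
      savg I (fun x => (u x / w x) ^ (1 / p)) ≤
        1 * (savg I u ^ (1 / p) *
          (savg I fun x => w x ^ (1 - conjExp p)) ^ (1 / conjExp p))) ∧
     (((max Cu 1)*(max Cw 1)) ^ (-(1/p)) * (savg I u ^ (1 / p) * savg I w ^ (-(1 / p))) ≤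
        savg I (fun x => (u x / w x) ^ (1 / p)) ∧
      savg I (fun x => (u x / w x) ^ (1 / p)) ≤
        (max Cw 1) ^ (1/p) * (savg I u ^ (1 / p) * savg I w ^ (-(1 / p)))) ∧
     (((max Cu 1)*(max Cw 1)) ^ (-(1/p)) * ((savg I fun x => u x ^ (1 / p)) *
        (savg I fun x => w x ^ (1 / p))⁻¹) ≤ savg I (fun x => (u x / w x) ^ (1 / p)) ∧
      savg I (fun x => (u x / w x) ^ (1 / p)) ≤
        ((max Cu 1)*(max Cw 1)) ^ (1/p) * ((savg I fun x => u x ^ (1 / p)) *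
          (savg I fun x => w x ^ (1 / p))⁻¹))) := by
  obtain ⟨hum, hu0, huL, huL', huAp⟩ := hu
  obtain ⟨hwm, hw0, hwL, hwL', hwAp⟩ := hw
  have hpq : p.HolderConjugate (conjExp p) :=
    (Real.holderConjugate_iff_eq_conjExponent hp).2 rfl
  have hp0 : 0 < p := hpq.pos
  have hq0 : 0 < conjExp p := hpq.symm.pos
  have hp1 : p - 1 ≠ 0 := hpq.sub_one_ne_zero
  have h2p : (0:ℝ) < 2*p - 1 := by linarith
  -- exponent identities
  have e2 : (1/p)*p = (1:ℝ) := by field_simp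
  have e1 : (-(1/p))*(conjExp p) = 1 - conjExp p := by
    simp only [conjExp]; field_simp; try ring
  have hst : Real.HolderConjugate ((2*p-1)/p) ((2*p-1)/(p-1)) := by
    rw [Real.holderConjugate_iff]; constructor
    · rw [lt_div_iff₀ hp0]; linarith
    · rw [inv_div, inv_div, ← add_div, div_eq_one_iff_eq h2p.ne']; ring
  have ea1 : (1/(2*p-1))*((2*p-1)/p) = 1/p := by field_simp
  have ea2 : (-(1/(2*p-1)))*((2*p-1)/(p-1)) = 1 - conjExp p := by
    simp only [conjExp]; field_simp; try ring
  have est : ((2*p-1)/p)/((2*p-1)/(p-1)) = 1/conjExp p := by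
    simp only [conjExp]; field_simp
  have e22 : (1/(2*p))*(2:ℝ) = 1/p := by field_simp; try ring
  have h22 : Real.HolderConjugate (2:ℝ) 2 := by constructor <;> norm_num
  -- basic integrabilities
  have hu_int : IntegrableOn u I.carrier volume := integrableOn_carrier huL I
  have hw_int : IntegrableOn w I.carrier volume := integrableOn_carrier hwL I
  have hud_int : IntegrableOn (fun x => u x ^ (1 - conjExp p)) I.carrier volume :=
    integrableOn_carrier huL' I
  have hwd_int : IntegrableOn (fun x => w x ^ (1 - conjExp p)) I.carrier volume :=
    integrableOn_carrier hwL' I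
  have iu1 : IntegrableOn (fun x => u x ^ ((1/p)*p)) I.carrier volume := by
    rw [e2]; simpa [Real.rpow_one] using hu_int
  have iw1 : IntegrableOn (fun x => w x ^ ((1/p)*p)) I.carrier volume := by
    rw [e2]; simpa [Real.rpow_one] using hw_int
  have iud : IntegrableOn (fun x => u x ^ ((-(1/p))*(conjExp p))) I.carrier volume := by
    rw [e1]; exact hud_int
  have iwd : IntegrableOn (fun x => w x ^ ((-(1/p))*(conjExp p))) I.carrier volume := by
    rw [e1]; exact hwd_int
  have i_one : IntegrableOn (fun _ : Fin d → ℝ => (1:ℝ)) I.carrier volume :=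
    integrableOn_const (by rw [I.volume_carrier]; exact ENNReal.ofReal_ne_top)
  have i_one' : IntegrableOn (fun _ : Fin d → ℝ => (1:ℝ) ^ ((0:ℝ)*(conjExp p)))
      I.carrier volume := by
    simpa [Real.rpow_zero] using i_one
  have one_pos' : ∀ᵐ x : Fin d → ℝ, 0 < (fun _ : Fin d → ℝ => (1:ℝ)) x :=
    ae_of_all _ fun _ => one_pos
  have iup : IntegrableOn (fun x => u x ^ (1/p)) I.carrier volume := by
    have h := integrableOn_rpow_mul I hpq hum measurable_const hu0 one_pos' iu1 i_one'
    simpa [Real.rpow_zero] using h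
  have iwp : IntegrableOn (fun x => w x ^ (1/p)) I.carrier volume := by
    have h := integrableOn_rpow_mul I hpq hwm measurable_const hw0 one_pos' iw1 i_one'
    simpa [Real.rpow_zero] using h
  -- ν and ν'
  have hae : (fun x => u x ^ (1/p) * w x ^ (-(1/p)))
      =ᵐ[volume.restrict I.carrier] (fun x => (u x / w x) ^ (1/p)) := by
    refine ae_restrict_of_ae ?_
    filter_upwards [hu0, hw0] with x hux hwx
    rw [Real.div_rpow hux.le hwx.le, Real.rpow_neg hwx.le]
    exact (div_eq_mul_inv _ _).symm
  have hae' : (fun x => w x ^ (1/p) * u x ^ (-(1/p)))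
      =ᵐ[volume.restrict I.carrier] (fun x => (w x / u x) ^ (1/p)) := by
    refine ae_restrict_of_ae ?_
    filter_upwards [hu0, hw0] with x hux hwx
    rw [Real.div_rpow hwx.le hux.le, Real.rpow_neg hux.le]
    exact (div_eq_mul_inv _ _).symm
  have inu : IntegrableOn (fun x => (u x / w x) ^ (1/p)) I.carrier volume :=
    (integrableOn_rpow_mul I hpq hum hwm hu0 hw0 iu1 iwd).congr hae
  have inu' : IntegrableOn (fun x => (w x / u x) ^ (1/p)) I.carrier volume :=
    (integrableOn_rpow_mul I hpq hwm hum hw0 hu0 iw1 iud).congr hae'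
  -- positivity of averages
  have hA : 0 < savg I u := savg_pos I hu_int hu0
  have hW : 0 < savg I w := savg_pos I hw_int hw0
  have hS : 0 < savg I (fun x => w x ^ (1 - conjExp p)) :=
    savg_pos I hwd_int (hw0.mono fun x hx => Real.rpow_pos_of_pos hx _)
  have hSU : 0 < savg I (fun x => u x ^ (1 - conjExp p)) :=
    savg_pos I hud_int (hu0.mono fun x hx => Real.rpow_pos_of_pos hx _)
  have hnu : 0 < savg I (fun x => (u x / w x) ^ (1/p)) := by
    refine savg_pos I inu ?_
    filter_upwards [hu0, hw0] with x hux hwx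
    exact Real.rpow_pos_of_pos (div_pos hux hwx) _
  have hnu' : 0 < savg I (fun x => (w x / u x) ^ (1/p)) := by
    refine savg_pos I inu' ?_
    filter_upwards [hu0, hw0] with x hux hwx
    exact Real.rpow_pos_of_pos (div_pos hwx hux) _
  have hP : 0 < savg I (fun x => u x ^ (1/p)) :=
    savg_pos I iup (hu0.mono fun x hx => Real.rpow_pos_of_pos hx _)
  have hQ : 0 < savg I (fun x => w x ^ (1/p)) :=
    savg_pos I iwp (hw0.mono fun x hx => Real.rpow_pos_of_pos hx _)
  -- fact (a)
  have fa : savg I (fun x => (u x / w x) ^ (1/p)) ≤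
      (savg I u) ^ (1/p) * (savg I fun x => w x ^ (1 - conjExp p)) ^ (1/conjExp p) := by
    have h := savg_rpow_holder I hpq hum hwm hu0 hw0 iu1 iwd
    rw [savg_congr I hae, e2, e1] at h
    simpa [Real.rpow_one] using h
  -- fact (b)
  have fb : savg I (fun x => (w x / u x) ^ (1/p)) ≤
      (savg I w) ^ (1/p) * (savg I fun x => u x ^ (1 - conjExp p)) ^ (1/conjExp p) := by
    have h := savg_rpow_holder I hpq hwm hum hw0 hu0 iw1 iud
    rw [savg_congr I hae', e2, e1] at h
    simpa [Real.rpow_one] using h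
  -- fact (c) : 1 ≤ nu * nu'
  have fc : 1 ≤ savg I (fun x => (u x / w x) ^ (1/p)) *
      savg I (fun x => (w x / u x) ^ (1/p)) := by
    have idiv : IntegrableOn (fun x => (u x / w x) ^ ((1/(2*p))*(2:ℝ))) I.carrier volume := by
      rw [e22]; exact inu
    have idiv' : IntegrableOn (fun x => (w x / u x) ^ ((1/(2*p))*(2:ℝ))) I.carrier volume := by
      rw [e22]; exact inu'
    have hdm : Measurable (fun x => u x / w x) := hum.div hwm
    have hdm' : Measurable (fun x => w x / u x) := hwm.div hum
    have hd0 : ∀ᵐ x : Fin d → ℝ, 0 < u x / w x := by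
      filter_upwards [hu0, hw0] with x hux hwx; exact div_pos hux hwx
    have hd0' : ∀ᵐ x : Fin d → ℝ, 0 < w x / u x := by
      filter_upwards [hu0, hw0] with x hux hwx; exact div_pos hwx hux
    have h := savg_rpow_holder I h22 hdm hdm' hd0 hd0' idiv idiv'
    rw [e22] at h
    have hone : (fun x => (u x / w x) ^ (1/(2*p)) * (w x / u x) ^ (1/(2*p)))
        =ᵐ[volume.restrict I.carrier] (fun _ => (1:ℝ)) := by
      refine ae_restrict_of_ae ?_
      filter_upwards [hu0, hw0] with x hux hwx
      rw [← Real.mul_rpow (by positivity) (by positivity),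
        div_mul_div_comm, mul_comm (u x) (w x), div_self (by positivity), Real.one_rpow]
    rw [savg_congr I hone, savg_one] at h
    have := one_le_mul_of_rpow hnu hnu' (by norm_num : (0:ℝ) < 2) h
    rwa [show (2:ℝ)/2 = 1 by norm_num, Real.rpow_one] at this
  -- fact (d) : 1 ≤ W^(1/p) S^(1/q)
  have fd : 1 ≤ (savg I w) ^ (1/p) *
      (savg I fun x => w x ^ (1 - conjExp p)) ^ (1/conjExp p) := by
    have h := savg_rpow_holder I hpq hwm hwm hw0 hw0 iw1 iwd
    rw [e2, e1] at h
    have hone : (fun x => w x ^ (1/p) * w x ^ (-(1/p)))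
        =ᵐ[volume.restrict I.carrier] (fun _ => (1:ℝ)) := by
      refine ae_restrict_of_ae ?_
      filter_upwards [hw0] with x hwx
      rw [← Real.rpow_add hwx, add_neg_cancel, Real.rpow_zero]
    rw [savg_congr I hone, savg_one] at h
    simpa [Real.rpow_one] using h
  -- fact (g) : P ≤ A^(1/p), Q ≤ W^(1/p)
  have fgP : savg I (fun x => u x ^ (1/p)) ≤ (savg I u) ^ (1/p) := by
    have h := savg_rpow_holder I hpq hum measurable_const hu0 one_pos' iu1 i_one'
    rw [e2] at h
    simp only [Real.rpow_zero, Real.rpow_one, mul_one, zero_mul] at h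
    rw [savg_one I] at h
    simpa [Real.one_rpow] using h
  have fgQ : savg I (fun x => w x ^ (1/p)) ≤ (savg I w) ^ (1/p) := by
    have h := savg_rpow_holder I hpq hwm measurable_const hw0 one_pos' iw1 i_one'
    rw [e2] at h
    simp only [Real.rpow_zero, Real.rpow_one, mul_one, zero_mul] at h
    rw [savg_one I] at h
    simpa [Real.one_rpow] using h
  -- fact (h)
  have iut : IntegrableOn (fun x => u x ^ ((1/(2*p-1))*((2*p-1)/p))) I.carrier volume := by
    rw [ea1]; exact iup
  have iut' : IntegrableOn (fun x => u x ^ ((-(1/(2*p-1)))*((2*p-1)/(p-1))))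
      I.carrier volume := by
    rw [ea2]; exact hud_int
  have iwt : IntegrableOn (fun x => w x ^ ((1/(2*p-1))*((2*p-1)/p))) I.carrier volume := by
    rw [ea1]; exact iwp
  have iwt' : IntegrableOn (fun x => w x ^ ((-(1/(2*p-1)))*((2*p-1)/(p-1))))
      I.carrier volume := by
    rw [ea2]; exact hwd_int
  have fhP : (savg I fun x => u x ^ (1 - conjExp p)) ^ (-(1/conjExp p)) ≤
      savg I (fun x => u x ^ (1/p)) := by
    have h := savg_rpow_holder I hst hum hum hu0 hu0 iut iut'
    rw [ea1, ea2] at h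
    have hone : (fun x => u x ^ (1/(2*p-1)) * u x ^ (-(1/(2*p-1))))
        =ᵐ[volume.restrict I.carrier] (fun _ => (1:ℝ)) := by
      refine ae_restrict_of_ae ?_
      filter_upwards [hu0] with x hux
      rw [← Real.rpow_add hux, add_neg_cancel, Real.rpow_zero]
    rw [savg_congr I hone, savg_one] at h
    have h2 := one_le_mul_of_rpow hP hSU (by positivity) h
    rw [est] at h2
    rw [Real.rpow_neg hSU.le, inv_le_iff_one_le_mul₀ (Real.rpow_pos_of_pos hSU _)]
    exact h2
  have fhQ : (savg I fun x => w x ^ (1 - conjExp p)) ^ (-(1/conjExp p)) ≤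
      savg I (fun x => w x ^ (1/p)) := by
    have h := savg_rpow_holder I hst hwm hwm hw0 hw0 iwt iwt'
    rw [ea1, ea2] at h
    have hone : (fun x => w x ^ (1/(2*p-1)) * w x ^ (-(1/(2*p-1))))
        =ᵐ[volume.restrict I.carrier] (fun _ => (1:ℝ)) := by
      refine ae_restrict_of_ae ?_
      filter_upwards [hw0] with x hwx
      rw [← Real.rpow_add hwx, add_neg_cancel, Real.rpow_zero]
    rw [savg_congr I hone, savg_one] at h
    have h2 := one_le_mul_of_rpow hQ hS (by positivity) h
    rw [est] at h2
    rw [Real.rpow_neg hS.le, inv_le_iff_one_le_mul₀ (Real.rpow_pos_of_pos hS _)]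
    exact h2
  -- A_p conditions with enlarged constants
  have apu : savg I u * (savg I fun x => u x ^ (1 - conjExp p)) ^ (p-1) ≤ max Cu 1 :=
    le_trans (huAp I) (le_max_left _ _)
  have apw : savg I w * (savg I fun x => w x ^ (1 - conjExp p)) ^ (p-1) ≤ max Cw 1 :=
    le_trans (hwAp I) (le_max_left _ _)
  have hKu : (0:ℝ) < max Cu 1 := lt_max_of_lt_right one_pos
  have hKw : (0:ℝ) < max Cw 1 := lt_max_of_lt_right one_pos
  exact ⟨hnu, hP, hQ,
    arith_main hpq hKu hKw hA hS hSU hW hnu hnu' hP hQ fa fb fc fd fgP fgQ fhP fhQ apu apw⟩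

private lemma setIntegral_vol_savg (I : Cube d) (f : (Fin d → ℝ) → ℝ) :
    ∫ x in I.carrier, f x = I.vol * savg I f := by
  unfold savg; rw [← mul_assoc, mul_inv_cancel₀ I.vol_pos.ne', one_mul]

/-- the rewriting of Bloom's BMO condition from the introduction.
If `u, w` are scalar `A_p` weights and `ν = (u w^{-1})^{1/p}`, then `m_I ν` is comparable
(with constants depending only on the `A_p` characteristics, `p` and `d`) to
`(m_I u)^{1/p} (m_I w^{1-p'})^{1/p'}`, to `(m_I u)^{1/p} (m_I w)^{-1/p}` and to
`(m_I u^{1/p})(m_I w^{1/p})^{-1}`; in particular `b ∈ BMO_ν` iff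
`sup_I (1/|I|) ∫_I (m_I w^{1/p})(m_I u^{1/p})^{-1} |b - m_I b| < ∞`. -/
theorem statement17 (d : ℕ) (p : ℝ) (hp : 1 < p) (Cu Cw : ℝ) :
    ∃ c₁ c₂ c₃ c₄ c₅ c₆ : ℝ,
      0 < c₁ ∧ 0 < c₂ ∧ 0 < c₃ ∧ 0 < c₄ ∧ 0 < c₅ ∧ 0 < c₆ ∧
      ∀ u w : (Fin d → ℝ) → ℝ, IsScalarAp p u Cu → IsScalarAp p w Cw →
        (∀ I : Cube d,
          (c₁ * (savg I u ^ (1 / p) *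
              (savg I fun x => w x ^ (1 - conjExp p)) ^ (1 / conjExp p)) ≤
              savg I (fun x => (u x / w x) ^ (1 / p)) ∧
            savg I (fun x => (u x / w x) ^ (1 / p)) ≤
              c₂ * (savg I u ^ (1 / p) *
                (savg I fun x => w x ^ (1 - conjExp p)) ^ (1 / conjExp p))) ∧
          (c₃ * (savg I u ^ (1 / p) * savg I w ^ (-(1 / p))) ≤
              savg I (fun x => (u x / w x) ^ (1 / p)) ∧
            savg I (fun x => (u x / w x) ^ (1 / p)) ≤
              c₄ * (savg I u ^ (1 / p) * savg I w ^ (-(1 / p)))) ∧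
          (c₅ * ((savg I fun x => u x ^ (1 / p)) * (savg I fun x => w x ^ (1 / p))⁻¹) ≤
              savg I (fun x => (u x / w x) ^ (1 / p)) ∧
            savg I (fun x => (u x / w x) ^ (1 / p)) ≤
              c₆ * ((savg I fun x => u x ^ (1 / p)) *
                (savg I fun x => w x ^ (1 / p))⁻¹))) ∧
        ∀ b : (Fin d → ℝ) → ℂ, LocallyIntegrable b volume →
          ((∃ C : ℝ, ∀ I : Cube d,
              (∫⁻ x in I.carrier, ENNReal.ofReal (‖b x - cavg I b‖)) ≤
                ENNReal.ofReal (C * ∫ x in I.carrier, (u x / w x) ^ (1 / p))) ↔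
            (∃ C : ℝ, ∀ I : Cube d,
              (∫⁻ x in I.carrier,
                ENNReal.ofReal
                  ((savg I fun x => w x ^ (1 / p)) *
                    (savg I fun x => u x ^ (1 / p))⁻¹ *
                    ‖b x - cavg I b‖)) ≤
                ENNReal.ofReal (C * I.vol))) := by
  have hKu : (0:ℝ) < max Cu 1 := lt_max_of_lt_right one_pos
  have hKw : (0:ℝ) < max Cw 1 := lt_max_of_lt_right one_pos
  have hKK : (0:ℝ) < (max Cu 1) * (max Cw 1) := mul_pos hKu hKw
  have hk : (0:ℝ) < ((max Cu 1)*(max Cw 1)) ^ (1/p) := Real.rpow_pos_of_pos hKK _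
  have hkneg : (0:ℝ) < ((max Cu 1)*(max Cw 1)) ^ (-(1/p)) := Real.rpow_pos_of_pos hKK _
  have kinv : ((max Cu 1)*(max Cw 1)) ^ (-(1/p)) = (((max Cu 1)*(max Cw 1)) ^ (1/p))⁻¹ :=
    Real.rpow_neg hKK.le _
  refine ⟨((max Cu 1)*(max Cw 1)) ^ (-(1/p)), 1, ((max Cu 1)*(max Cw 1)) ^ (-(1/p)),
    (max Cw 1) ^ (1/p), ((max Cu 1)*(max Cw 1)) ^ (-(1/p)), ((max Cu 1)*(max Cw 1)) ^ (1/p),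
    hkneg, one_pos, hkneg, Real.rpow_pos_of_pos hKw _, hkneg, hk, fun u w hu hw => ?_⟩
  refine ⟨fun I => (cube_facts hp hu hw I).2.2.2, fun b hb => ?_⟩
  constructor
  · rintro ⟨C, hC⟩
    refine ⟨max C 0 * (((max Cu 1)*(max Cw 1)) ^ (1/p)), fun I => ?_⟩
    obtain ⟨hnu, hP, hQ, hB⟩ := cube_facts hp hu hw I
    have hB3 := hB.2.2
    set P := savg I fun x => u x ^ (1/p) with hPdef
    set Q := savg I fun x => w x ^ (1/p) with hQdef
    set ν := savg I fun x => (u x / w x) ^ (1/p) with hνdef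
    have hQP : (0:ℝ) < Q * P⁻¹ := mul_pos hQ (inv_pos.2 hP)
    have key : (∫⁻ x in I.carrier, ENNReal.ofReal (Q * P⁻¹ * ‖b x - cavg I b‖)) =
        ENNReal.ofReal (Q * P⁻¹) *
          ∫⁻ x in I.carrier, ENNReal.ofReal (‖b x - cavg I b‖) := by
      simp_rw [ENNReal.ofReal_mul hQP.le]
      exact lintegral_const_mul' _ _ ENNReal.ofReal_ne_top
    have hIv : ∫ x in I.carrier, (u x / w x) ^ (1/p) = I.vol * ν :=
      setIntegral_vol_savg I _
    have hc6 : Q * P⁻¹ * ν ≤ ((max Cu 1)*(max Cw 1)) ^ (1/p) := by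
      calc Q * P⁻¹ * ν ≤ Q * P⁻¹ * (((max Cu 1)*(max Cw 1)) ^ (1/p) * (P * Q⁻¹)) :=
            mul_le_mul_of_nonneg_left hB3.2 hQP.le
        _ = ((max Cu 1)*(max Cw 1)) ^ (1/p) * ((Q * Q⁻¹) * (P⁻¹ * P)) := by ring
        _ = _ := by rw [mul_inv_cancel₀ hQ.ne', inv_mul_cancel₀ hP.ne', mul_one, mul_one]
    calc (∫⁻ x in I.carrier, ENNReal.ofReal (Q * P⁻¹ * ‖b x - cavg I b‖))
        = ENNReal.ofReal (Q * P⁻¹) *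
            ∫⁻ x in I.carrier, ENNReal.ofReal (‖b x - cavg I b‖) := key
      _ ≤ ENNReal.ofReal (Q * P⁻¹) *
            ENNReal.ofReal (C * ∫ x in I.carrier, (u x / w x) ^ (1/p)) :=
          mul_le_mul_right (hC I) _
      _ ≤ ENNReal.ofReal (max C 0 * (((max Cu 1)*(max Cw 1)) ^ (1/p)) * I.vol) := by
          rw [← ENNReal.ofReal_mul hQP.le]
          apply ENNReal.ofReal_le_ofReal
          rw [hIv]
          calc Q * P⁻¹ * (C * (I.vol * ν))
              ≤ Q * P⁻¹ * (max C 0 * (I.vol * ν)) :=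
                mul_le_mul_of_nonneg_left (mul_le_mul_of_nonneg_right (le_max_left C 0)
                  (mul_nonneg I.vol_pos.le hnu.le)) hQP.le
            _ = max C 0 * I.vol * (Q * P⁻¹ * ν) := by ring
            _ ≤ max C 0 * I.vol * (((max Cu 1)*(max Cw 1)) ^ (1/p)) :=
                mul_le_mul_of_nonneg_left hc6
                  (mul_nonneg (le_max_right C 0) I.vol_pos.le)
            _ = max C 0 * (((max Cu 1)*(max Cw 1)) ^ (1/p)) * I.vol := by ring
  · rintro ⟨C, hC⟩
    refine ⟨max C 0 * (((max Cu 1)*(max Cw 1)) ^ (1/p)), fun I => ?_⟩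
    obtain ⟨hnu, hP, hQ, hB⟩ := cube_facts hp hu hw I
    have hB3 := hB.2.2
    set P := savg I fun x => u x ^ (1/p) with hPdef
    set Q := savg I fun x => w x ^ (1/p) with hQdef
    set ν := savg I fun x => (u x / w x) ^ (1/p) with hνdef
    have hPQ : (0:ℝ) < P * Q⁻¹ := mul_pos hP (inv_pos.2 hQ)
    have hPk : P * Q⁻¹ ≤ ((max Cu 1)*(max Cw 1)) ^ (1/p) * ν := by
      have h1 := hB3.1
      rw [kinv, inv_mul_le_iff₀ hk] at h1
      exact h1
    have key2 : (∫⁻ x in I.carrier, ENNReal.ofReal (‖b x - cavg I b‖)) =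
        ENNReal.ofReal (P * Q⁻¹) *
          ∫⁻ x in I.carrier, ENNReal.ofReal (Q * P⁻¹ * ‖b x - cavg I b‖) := by
      rw [← lintegral_const_mul' _ _ ENNReal.ofReal_ne_top]
      refine lintegral_congr fun x => ?_
      rw [← ENNReal.ofReal_mul hPQ.le]
      congr 1
      field_simp
    have hIv : ∫ x in I.carrier, (u x / w x) ^ (1/p) = I.vol * ν :=
      setIntegral_vol_savg I _
    calc (∫⁻ x in I.carrier, ENNReal.ofReal (‖b x - cavg I b‖))
        = ENNReal.ofReal (P * Q⁻¹) *
            ∫⁻ x in I.carrier, ENNReal.ofReal (Q * P⁻¹ * ‖b x - cavg I b‖) := key2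
      _ ≤ ENNReal.ofReal (P * Q⁻¹) * ENNReal.ofReal (C * I.vol) :=
          mul_le_mul_right (hC I) _
      _ ≤ ENNReal.ofReal (max C 0 * (((max Cu 1)*(max Cw 1)) ^ (1/p)) *
            ∫ x in I.carrier, (u x / w x) ^ (1/p)) := by
          rw [← ENNReal.ofReal_mul hPQ.le]
          apply ENNReal.ofReal_le_ofReal
          rw [hIv]
          calc P * Q⁻¹ * (C * I.vol)
              ≤ P * Q⁻¹ * (max C 0 * I.vol) :=
                mul_le_mul_of_nonneg_left
                  (mul_le_mul_of_nonneg_right (le_max_left C 0) I.vol_pos.le) hPQ.le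
            _ = max C 0 * I.vol * (P * Q⁻¹) := by ring
            _ ≤ max C 0 * I.vol * (((max Cu 1)*(max Cw 1)) ^ (1/p) * ν) :=
                mul_le_mul_of_nonneg_left hPk
                  (mul_nonneg (le_max_right C 0) I.vol_pos.le)
            _ = max C 0 * (((max Cu 1)*(max Cw 1)) ^ (1/p)) * (I.vol * ν) := by ring


end MW
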